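/- Let θ₂, θ₃ > 0 and 0 < ε < θ₃²/132. Then the function r ↦ g(r; θ₂, θ₃) − 4εθ₂·|132θ₃¹⁰/r¹² − 30θ₃⁴/r⁶| on (0,∞) is lower regular. -/

import Mathlib

/-- The Lennard-Jones pair potential with parameters θ₂, θ₃. -/
noncomputable def gLJ (θ₂ θ₃ r : ℝ) : ℝ := 4 * θ₂ * ((θ₃ / r) ^ 12 - (θ₃ / r) ^ 6)


/-- A function `f` on `(0,∞)` is lower regular if it is bounded below by `-ψ` for
some positive nonincreasing function `ψ` with `∫₀^∞ r·ψ(r) dr < ∞`. -/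
def LowerRegular (f : ℝ → ℝ) : Prop :=
  ∃ ψ : ℝ → ℝ, (∀ r > (0 : ℝ), 0 < ψ r) ∧ AntitoneOn ψ (Set.Ioi 0) ∧
    MeasureTheory.IntegrableOn (fun r => r * ψ r) (Set.Ioi 0) ∧
    ∀ r > (0 : ℝ), -ψ r ≤ f r

theorem stmt8 (θ₂ θ₃ ε : ℝ) (h2 : 0 < θ₂) (h3 : 0 < θ₃)
    (hε0 : 0 < ε) (hε : ε < θ₃ ^ 2 / 132) :
    LowerRegular (fun r =>
      gLJ θ₂ θ₃ r - 4 * ε * θ₂ * |132 * θ₃ ^ 10 / r ^ 12 - 30 * θ₃ ^ 4 / r ^ 6|) := by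
  set a := 4 * θ₂ * (θ₃ ^ 12 - 132 * ε * θ₃ ^ 10) with ha_def
  set C := 4 * θ₂ * (θ₃ ^ 6 + 30 * ε * θ₃ ^ 4) with hC_def
  have ha : 0 < a := by
    have h132 : 132 * ε < θ₃ ^ 2 := by linarith [hε]
    rw [ha_def]
    nlinarith [mul_pos (mul_pos h2 (pow_pos h3 10)) (sub_pos.mpr h132)]
  have hC : 0 < C := by positivity
  have hB : 0 < C ^ 2 / a := by positivity
  refine ⟨fun r => min (C ^ 2 / a) (C / r ^ 6), ?_, ?_, ?_, ?_⟩
  · intro r hr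
    exact lt_min hB (by positivity)
  · intro x hx y hy hxy
    exact min_le_min le_rfl
      (div_le_div_of_nonneg_left hC.le (pow_pos hx 6) (pow_le_pow_left₀ hx.le hxy 6))
  · have hmeas : Measurable (fun r : ℝ => r * min (C ^ 2 / a) (C / r ^ 6)) := by
      fun_prop
    have hsplit : Set.Ioi (0:ℝ) = Set.Ioc 0 1 ∪ Set.Ioi 1 := by
      rw [Set.Ioc_union_Ioi_eq_Ioi zero_le_one]
    rw [hsplit]
    apply MeasureTheory.IntegrableOn.union
    · apply MeasureTheory.Integrable.mono'
        ((MeasureTheory.integrableOn_const_iff).mpr (Or.inr measure_Ioc_lt_top) :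
          MeasureTheory.IntegrableOn (fun _ : ℝ => C ^ 2 / a) (Set.Ioc 0 1) _)
        hmeas.aestronglyMeasurable.restrict
      filter_upwards [MeasureTheory.ae_restrict_mem measurableSet_Ioc] with r hr
      have h0 : (0:ℝ) < r := hr.1
      have hmin : 0 ≤ min (C ^ 2 / a) (C / r ^ 6) := le_min hB.le (by positivity)
      rw [Real.norm_eq_abs, abs_of_nonneg (by positivity)]
      calc r * min (C ^ 2 / a) (C / r ^ 6) ≤ 1 * (C ^ 2 / a) :=
            mul_le_mul hr.2 (min_le_left _ _) hmin zero_le_one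
        _ = C ^ 2 / a := one_mul _
    · apply MeasureTheory.Integrable.mono'
        ((integrableOn_Ioi_rpow_of_lt (show (-5:ℝ) < -1 by norm_num) one_pos).const_mul C)
        hmeas.aestronglyMeasurable.restrict
      filter_upwards [MeasureTheory.ae_restrict_mem measurableSet_Ioi] with r hr
      have h0 : (0:ℝ) < r := lt_trans one_pos hr
      rw [Real.norm_eq_abs, abs_of_nonneg (by positivity)]
      have : r ^ ((-5:ℝ)) = 1 / r ^ 5 := by
        rw [Real.rpow_neg h0.le, ← Real.rpow_natCast r 5]
        · push_cast; rw [one_div]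
      rw [this]
      calc r * min (C ^ 2 / a) (C / r ^ 6) ≤ r * (C / r ^ 6) :=
            mul_le_mul_of_nonneg_left (min_le_right _ _) h0.le
        _ = C * (1 / r ^ 5) := by field_simp
  · intro r hr
    have hr6 : (0:ℝ) < r ^ 6 := pow_pos hr 6
    have hr12 : (0:ℝ) < r ^ 12 := pow_pos hr 12
    have habs : |132 * θ₃ ^ 10 / r ^ 12 - 30 * θ₃ ^ 4 / r ^ 6|
        ≤ 132 * θ₃ ^ 10 / r ^ 12 + 30 * θ₃ ^ 4 / r ^ 6 := by
      have h1 : (0:ℝ) ≤ 132 * θ₃ ^ 10 / r ^ 12 := by positivity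
      have h2 : (0:ℝ) ≤ 30 * θ₃ ^ 4 / r ^ 6 := by positivity
      rw [abs_le]; constructor <;> linarith
    have hkey : a / r ^ 12 - C / r ^ 6 ≤
        gLJ θ₂ θ₃ r - 4 * ε * θ₂ * |132 * θ₃ ^ 10 / r ^ 12 - 30 * θ₃ ^ 4 / r ^ 6| := by
      have heq : gLJ θ₂ θ₃ r - 4 * ε * θ₂ * (132 * θ₃ ^ 10 / r ^ 12 + 30 * θ₃ ^ 4 / r ^ 6)
          = a / r ^ 12 - C / r ^ 6 := by
        unfold gLJ
        rw [ha_def, hC_def]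
        field_simp
        ring
      have hmul : 4 * ε * θ₂ * |132 * θ₃ ^ 10 / r ^ 12 - 30 * θ₃ ^ 4 / r ^ 6|
          ≤ 4 * ε * θ₂ * (132 * θ₃ ^ 10 / r ^ 12 + 30 * θ₃ ^ 4 / r ^ 6) :=
        mul_le_mul_of_nonneg_left habs (by positivity)
      linarith [hmul, heq]
    simp only
    by_cases hcase : r ^ 6 ≤ a / C
    · have h1 : C / r ^ 6 ≤ a / r ^ 12 := by
        rw [div_le_div_iff₀ hr6 hr12]
        have : C * r ^ 6 ≤ a := by
          rw [le_div_iff₀ hC] at hcase; linarith [hcase]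
        calc C * r ^ 12 = (C * r ^ 6) * r ^ 6 := by ring
          _ ≤ a * r ^ 6 := mul_le_mul_of_nonneg_right this hr6.le
      have hmin : 0 ≤ min (C ^ 2 / a) (C / r ^ 6) := le_min hB.le (by positivity)
      linarith
    · push_neg at hcase
      have h1 : C / r ^ 6 ≤ C ^ 2 / a := by
        rw [div_le_div_iff₀ hr6 ha]
        rw [div_lt_iff₀ hC] at hcase
        nlinarith
      have hmin : min (C ^ 2 / a) (C / r ^ 6) = C / r ^ 6 := min_eq_right h1
      rw [hmin]
      have h2 : 0 ≤ a / r ^ 12 := by positivity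
      linarith
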